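/- For the Freund submanifold F₂ with parameters (a,b)=(α₁,β₁), the correlation coefficient is ρ = 1 − 4a²/(3a²+b²), and ρ ∈ (−1/3, 1) for all a,b>0. -/

import Mathlib

open MeasureTheory Real

set_option maxHeartbeats 1000000

/-- Density of the Freund submanifold `F₂` (`α₁ = α₂ = a`, `β₁ = β₂ = b`). -/
noncomputable def freundF2 (a b : ℝ) (x y : ℝ) : ℝ :=
  if 0 < x ∧ x < y then a * b * Real.exp (-b * y - (2 * a - b) * x)
  else if 0 < y ∧ y < x then a * b * Real.exp (-b * x - (2 * a - b) * y)
  else 0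

/-- Expectation of `φ(x,y)` under the `F₂` density. -/
noncomputable def f2E (a b : ℝ) (φ : ℝ → ℝ → ℝ) : ℝ :=
  ∫ x in Set.Ioi (0:ℝ), ∫ y in Set.Ioi (0:ℝ), φ x y * freundF2 a b x y

/-- Correlation coefficient of `X` and `Y` under the `F₂` density. -/
noncomputable def f2Rho (a b : ℝ) : ℝ :=
  (f2E a b (fun x y => x * y) - f2E a b (fun x _ => x) * f2E a b (fun _ y => y)) /
    (Real.sqrt (f2E a b (fun x _ => x ^ 2) - (f2E a b (fun x _ => x)) ^ 2) *
     Real.sqrt (f2E a b (fun _ y => y ^ 2) - (f2E a b (fun _ y => y)) ^ 2))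

private lemma hasDerivAt_polyExp (K c3 c2 c1 c0 : ℝ) (t : ℝ) :
    HasDerivAt (fun t : ℝ => (c3*t^3 + c2*t^2 + c1*t + c0) * Real.exp (-(K*t)))
      ((3*c3*t^2 + 2*c2*t + c1 - K*(c3*t^3 + c2*t^2 + c1*t + c0)) * Real.exp (-(K*t))) t := by
  have hp : HasDerivAt (fun t : ℝ => c3*t^3 + c2*t^2 + c1*t + c0) (3*c3*t^2 + 2*c2*t + c1) t := by
    have h3 := (hasDerivAt_pow 3 t).const_mul c3
    have h2 := (hasDerivAt_pow 2 t).const_mul c2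
    have h1 := (hasDerivAt_id t).const_mul c1
    have h := ((h3.add h2).add h1).add_const c0
    exact h.congr_deriv (by push_cast; ring)
  have he : HasDerivAt (fun t : ℝ => Real.exp (-(K*t))) (-K * Real.exp (-(K*t))) t := by
    have h : HasDerivAt (fun t : ℝ => -(K*t)) (-K) t := by
      exact ((hasDerivAt_id t).const_mul K).neg.congr_deriv (by ring)
    have := (Real.hasDerivAt_exp (-(K*t))).comp t h
    exact this.congr_deriv (by ring)
  have := hp.mul he
  exact this.congr_deriv (by ring)

private lemma tendsto_polyExp (K : ℝ) (hK : 0 < K) (c3 c2 c1 c0 : ℝ) :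
    Filter.Tendsto (fun t : ℝ => (c3*t^3 + c2*t^2 + c1*t + c0) * Real.exp (-(K*t)))
      Filter.atTop (nhds 0) := by
  have base : ∀ n : ℕ, Filter.Tendsto (fun t : ℝ => t^n * Real.exp (-(K*t)))
      Filter.atTop (nhds 0) := by
    intro n
    have h := (tendsto_pow_mul_exp_neg_atTop_nhds_zero n).comp
      (Filter.tendsto_id.const_mul_atTop hK)
    have h2 := h.mul_const ((K:ℝ)^n)⁻¹
    rw [zero_mul] at h2
    refine h2.congr fun t => ?_
    have hKn : (K:ℝ)^n ≠ 0 := pow_ne_zero _ (ne_of_gt hK)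
    simp only [Function.comp_apply, id]
    field_simp [mul_pow]
    ring
  have h := (((base 3).const_mul c3).add ((base 2).const_mul c2)).add
    (((base 1).const_mul c1).add ((base 0).const_mul c0))
  simp only [mul_zero, add_zero, pow_one, pow_zero, one_mul] at h
  refine h.congr fun t => ?_
  ring

private lemma exp_Ioi0 (K : ℝ) (hK : 0 < K) (s : ℝ) :
    IntegrableOn (fun t : ℝ => Real.exp (-(K*t))) (Set.Ioi s) ∧
    ∫ t in Set.Ioi s, Real.exp (-(K*t)) = Real.exp (-(K*s))/K := by
  have hg : ∀ x ∈ Set.Ici s, HasDerivAt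
      (fun t : ℝ => (0*t^3+0*t^2+0*t+(-(1/K))) * Real.exp (-(K*t)))
      (Real.exp (-(K*x))) x := by
    intro x _
    have h := hasDerivAt_polyExp K 0 0 0 (-(1/K)) x
    convert h using 1
    field_simp
    ring
  have hpos : ∀ x ∈ Set.Ioi s, 0 ≤ Real.exp (-(K*x)) := fun x _ => (Real.exp_pos _).le
  have hlim := tendsto_polyExp K hK 0 0 0 (-(1/K))
  refine ⟨integrableOn_Ioi_deriv_of_nonneg' hg hpos hlim, ?_⟩
  rw [integral_Ioi_of_hasDerivAt_of_nonneg' hg hpos hlim]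
  field_simp
  ring

private lemma pow1_exp_Ioi (K : ℝ) (hK : 0 < K) (s : ℝ) (hs : 0 ≤ s) :
    IntegrableOn (fun t : ℝ => t * Real.exp (-(K*t))) (Set.Ioi s) ∧
    ∫ t in Set.Ioi s, t * Real.exp (-(K*t)) = (s/K + 1/K^2) * Real.exp (-(K*s)) := by
  have hg : ∀ x ∈ Set.Ici s, HasDerivAt
      (fun t : ℝ => (0*t^3+0*t^2+(-(1/K))*t+(-(1/K^2))) * Real.exp (-(K*t)))
      (x * Real.exp (-(K*x))) x := by
    intro x _
    have h := hasDerivAt_polyExp K 0 0 (-(1/K)) (-(1/K^2)) x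
    convert h using 1
    field_simp
    ring
  have hpos : ∀ x ∈ Set.Ioi s, 0 ≤ x * Real.exp (-(K*x)) := fun x hx =>
    mul_nonneg (le_trans hs (le_of_lt hx)) (Real.exp_pos _).le
  have hlim := tendsto_polyExp K hK 0 0 (-(1/K)) (-(1/K^2))
  refine ⟨integrableOn_Ioi_deriv_of_nonneg' hg hpos hlim, ?_⟩
  rw [integral_Ioi_of_hasDerivAt_of_nonneg' hg hpos hlim]
  field_simp
  ring

private lemma pow2_exp_Ioi (K : ℝ) (hK : 0 < K) (s : ℝ) :
    IntegrableOn (fun t : ℝ => t^2 * Real.exp (-(K*t))) (Set.Ioi s) ∧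
    ∫ t in Set.Ioi s, t^2 * Real.exp (-(K*t)) = (s^2/K + 2*s/K^2 + 2/K^3) * Real.exp (-(K*s)) := by
  have hg : ∀ x ∈ Set.Ici s, HasDerivAt
      (fun t : ℝ => (0*t^3+(-(1/K))*t^2+(-(2/K^2))*t+(-(2/K^3))) * Real.exp (-(K*t)))
      (x^2 * Real.exp (-(K*x))) x := by
    intro x _
    have h := hasDerivAt_polyExp K 0 (-(1/K)) (-(2/K^2)) (-(2/K^3)) x
    convert h using 1
    field_simp
    ring
  have hpos : ∀ x ∈ Set.Ioi s, 0 ≤ x^2 * Real.exp (-(K*x)) := fun x _ =>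
    mul_nonneg (sq_nonneg _) (Real.exp_pos _).le
  have hlim := tendsto_polyExp K hK 0 (-(1/K)) (-(2/K^2)) (-(2/K^3))
  refine ⟨integrableOn_Ioi_deriv_of_nonneg' hg hpos hlim, ?_⟩
  rw [integral_Ioi_of_hasDerivAt_of_nonneg' hg hpos hlim]
  field_simp
  ring

private lemma pow3_exp_Ioi (K : ℝ) (hK : 0 < K) (s : ℝ) (hs : 0 ≤ s) :
    IntegrableOn (fun t : ℝ => t^3 * Real.exp (-(K*t))) (Set.Ioi s) ∧
    ∫ t in Set.Ioi s, t^3 * Real.exp (-(K*t))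
      = (s^3/K + 3*s^2/K^2 + 6*s/K^3 + 6/K^4) * Real.exp (-(K*s)) := by
  have hg : ∀ x ∈ Set.Ici s, HasDerivAt
      (fun t : ℝ => ((-(1/K))*t^3+(-(3/K^2))*t^2+(-(6/K^3))*t+(-(6/K^4))) * Real.exp (-(K*t)))
      (x^3 * Real.exp (-(K*x))) x := by
    intro x _
    have h := hasDerivAt_polyExp K (-(1/K)) (-(3/K^2)) (-(6/K^3)) (-(6/K^4)) x
    convert h using 1
    field_simp
    ring
  have hpos : ∀ x ∈ Set.Ioi s, 0 ≤ x^3 * Real.exp (-(K*x)) := fun x hx =>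
    mul_nonneg (pow_nonneg (le_trans hs (le_of_lt hx)) 3) (Real.exp_pos _).le
  have hlim := tendsto_polyExp K hK (-(1/K)) (-(3/K^2)) (-(6/K^3)) (-(6/K^4))
  refine ⟨integrableOn_Ioi_deriv_of_nonneg' hg hpos hlim, ?_⟩
  rw [integral_Ioi_of_hasDerivAt_of_nonneg' hg hpos hlim]
  field_simp
  ring

private lemma polyExp_Ioi0 (K : ℝ) (hK : 0 < K) (c3 c2 c1 c0 : ℝ) :
    IntegrableOn (fun x : ℝ => (c3*x^3+c2*x^2+c1*x+c0) * Real.exp (-(K*x))) (Set.Ioi 0) ∧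
    ∫ x in Set.Ioi (0:ℝ), (c3*x^3+c2*x^2+c1*x+c0) * Real.exp (-(K*x))
      = c0/K + c1/K^2 + 2*c2/K^3 + 6*c3/K^4 := by
  have h0 := exp_Ioi0 K hK 0
  have h1 := pow1_exp_Ioi K hK 0 le_rfl
  have h2 := pow2_exp_Ioi K hK 0
  have h3 := pow3_exp_Ioi K hK 0 le_rfl
  have hfe : (fun x : ℝ => (c3*x^3+c2*x^2+c1*x+c0) * Real.exp (-(K*x)))
      = fun x : ℝ => c3*(x^3*Real.exp (-(K*x))) + (c2*(x^2*Real.exp (-(K*x)))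
        + (c1*(x*Real.exp (-(K*x))) + c0*(Real.exp (-(K*x))))) := by
    funext x; ring
  have hi3 := h3.1.const_mul c3
  have hi2 := h2.1.const_mul c2
  have hi1 := h1.1.const_mul c1
  have hi0 := h0.1.const_mul c0
  have hi10 : Integrable (fun x : ℝ => c1*(x*Real.exp (-(K*x))) + c0*(Real.exp (-(K*x))))
      (volume.restrict (Set.Ioi 0)) := hi1.add hi0
  have hi210 : Integrable (fun x : ℝ => c2*(x^2*Real.exp (-(K*x)))
      + (c1*(x*Real.exp (-(K*x))) + c0*(Real.exp (-(K*x))))) (volume.restrict (Set.Ioi 0)) :=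
    hi2.add hi10
  constructor
  · rw [hfe]
    exact hi3.add hi210
  · rw [hfe, integral_add hi3 hi210, integral_add hi2 hi10,
      integral_add hi1 hi0, integral_const_mul, integral_const_mul, integral_const_mul,
      integral_const_mul, h0.2, h1.2, h2.2, h3.2]
    norm_num
    field_simp
    ring

private lemma outer_eval (a b : ℝ) (ha : 0 < a) (hb : 0 < b) (p3 p2 p1 p0 q3 q2 q1 q0 : ℝ) :
    ∫ x in Set.Ioi (0:ℝ), ((p3*x^3+p2*x^2+p1*x+p0) * Real.exp (-(b*x))
        + (q3*x^3+q2*x^2+q1*x+q0) * Real.exp (-(2*a*x)))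
      = (p0/b + p1/b^2 + 2*p2/b^3 + 6*p3/b^4)
        + (q0/(2*a) + q1/(2*a)^2 + 2*q2/(2*a)^3 + 6*q3/(2*a)^4) := by
  have ha2 : 0 < 2*a := by linarith
  have hp := polyExp_Ioi0 b hb p3 p2 p1 p0
  have hq := polyExp_Ioi0 (2*a) ha2 q3 q2 q1 q0
  rw [integral_add hp.1 hq.1, hp.2, hq.2]

private lemma intA0 (c x : ℝ) (hc : c ≠ 0) :
    ∫ y in (0:ℝ)..x, Real.exp (-(c*y)) = (1 - Real.exp (-(c*x)))/c := by
  have hd : ∀ y ∈ Set.uIcc (0:ℝ) x, HasDerivAt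
      (fun y : ℝ => (0*y^3+0*y^2+0*y+(-(1/c))) * Real.exp (-(c*y))) (Real.exp (-(c*y))) y := by
    intro y _
    have h := hasDerivAt_polyExp c 0 0 0 (-(1/c)) y
    convert h using 1
    field_simp
    ring
  have hi : IntervalIntegrable (fun y : ℝ => Real.exp (-(c*y))) volume 0 x :=
    (Real.continuous_exp.comp (by continuity)).intervalIntegrable 0 x
  rw [intervalIntegral.integral_eq_sub_of_hasDerivAt hd hi]
  simp
  field_simp
  ring

private lemma intA1 (c x : ℝ) (hc : c ≠ 0) :
    ∫ y in (0:ℝ)..x, y * Real.exp (-(c*y)) = (1 - (1+c*x) * Real.exp (-(c*x)))/c^2 := by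
  have hd : ∀ y ∈ Set.uIcc (0:ℝ) x, HasDerivAt
      (fun y : ℝ => (0*y^3+0*y^2+(-(1/c))*y+(-(1/c^2))) * Real.exp (-(c*y)))
      (y * Real.exp (-(c*y))) y := by
    intro y _
    have h := hasDerivAt_polyExp c 0 0 (-(1/c)) (-(1/c^2)) y
    convert h using 1
    field_simp
    ring
  have hi : IntervalIntegrable (fun y : ℝ => y * Real.exp (-(c*y))) volume 0 x :=
    (continuous_id.mul (Real.continuous_exp.comp (by continuity))).intervalIntegrable 0 x
  rw [intervalIntegral.integral_eq_sub_of_hasDerivAt hd hi]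
  simp
  field_simp
  ring

private lemma intA2 (c x : ℝ) (hc : c ≠ 0) :
    ∫ y in (0:ℝ)..x, y^2 * Real.exp (-(c*y))
      = (2 - (c^2*x^2+2*c*x+2) * Real.exp (-(c*x)))/c^3 := by
  have hd : ∀ y ∈ Set.uIcc (0:ℝ) x, HasDerivAt
      (fun y : ℝ => (0*y^3+(-(1/c))*y^2+(-(2/c^2))*y+(-(2/c^3))) * Real.exp (-(c*y)))
      (y^2 * Real.exp (-(c*y))) y := by
    intro y _
    have h := hasDerivAt_polyExp c 0 (-(1/c)) (-(2/c^2)) (-(2/c^3)) y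
    convert h using 1
    field_simp
    ring
  have hi : IntervalIntegrable (fun y : ℝ => y^2 * Real.exp (-(c*y))) volume 0 x :=
    ((continuous_pow 2).mul (Real.continuous_exp.comp (by continuity))).intervalIntegrable 0 x
  rw [intervalIntegral.integral_eq_sub_of_hasDerivAt hd hi]
  simp
  field_simp
  ring

private lemma inner_split (a b : ℝ) {x : ℝ} (hx : 0 < x) (φ : ℝ → ℝ → ℝ)
    (hφ : Continuous (φ x))
    (hint : IntegrableOn (fun y => φ x y * (a * b * Real.exp (-b * y - (2*a-b) * x)))
      (Set.Ioi x)) :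
    ∫ y in Set.Ioi (0:ℝ), φ x y * freundF2 a b x y
      = (∫ y in (0:ℝ)..x, φ x y * (a * b * Real.exp (-b * x - (2*a-b) * y)))
        + ∫ y in Set.Ioi x, φ x y * (a * b * Real.exp (-b * y - (2*a-b) * x)) := by
  have hne : ∀ᵐ (y : ℝ) ∂volume, y ≠ x := by
    rw [ae_iff]
    simpa using measure_singleton x
  have hg : Continuous (fun y => φ x y * (a * b * Real.exp (-b * x - (2*a-b) * y))) :=
    hφ.mul (continuous_const.mul (Real.continuous_exp.comp (by continuity)))
  have haeIoc : (fun y => φ x y * (a * b * Real.exp (-b * x - (2*a-b) * y)))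
      =ᵐ[volume.restrict (Set.Ioc 0 x)] (fun y => φ x y * freundF2 a b x y) := by
    filter_upwards [ae_restrict_mem measurableSet_Ioc, ae_restrict_of_ae hne] with y hy hyx
    have h1 : ¬ (0 < x ∧ x < y) := by
      rintro ⟨-, h⟩; exact absurd hy.2 (not_le.mpr h)
    have h2 : 0 < y ∧ y < x := ⟨hy.1, lt_of_le_of_ne hy.2 hyx⟩
    simp [freundF2, h1, h2]
  have hI1 : IntegrableOn (fun y => φ x y * freundF2 a b x y) (Set.Ioc 0 x) :=
    (hg.integrableOn_Ioc).congr haeIoc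
  have hI2 : IntegrableOn (fun y => φ x y * freundF2 a b x y) (Set.Ioi x) := by
    refine hint.congr_fun (fun y hy => ?_) measurableSet_Ioi
    simp [freundF2, hx, hy.out]
  rw [← Set.Ioc_union_Ioi_eq_Ioi hx.le,
    setIntegral_union (Set.Ioc_disjoint_Ioi le_rfl) measurableSet_Ioi hI1 hI2]
  congr 1
  · rw [intervalIntegral.integral_of_le hx.le]
    exact (integral_congr_ae haeIoc).symm
  · refine setIntegral_congr_fun measurableSet_Ioi fun y hy => ?_
    simp [freundF2, hx, hy.out]

private lemma f2E_X (a b : ℝ) (ha : 0 < a) (hb : 0 < b) :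
    f2E a b (fun x _ => x) = (a+b)/(2*a*b) := by
  unfold f2E
  by_cases hc : (2*a - b) = 0
  · have hb2 : b = 2*a := by linarith
    subst hb2
    have hEq : ∀ x ∈ Set.Ioi (0:ℝ),
        (∫ y in Set.Ioi (0:ℝ), (fun x (_:ℝ) => x) x y * freundF2 a (2*a) x y)
          = (0*x^3 + (2*a^2)*x^2 + a*x + 0) * Real.exp (-(2*a*x)) := by
      intro x hx
      have hfun2 : (fun y => (fun x (_:ℝ) => x) x y
            * (a * (2*a) * Real.exp (-(2*a) * y - (2*a-(2*a)) * x)))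
          = fun y => (x*(a*(2*a))) * Real.exp (-((2*a)*y)) := by
        funext y
        rw [show -(2*a) * y - (2*a-(2*a)) * x = -((2*a)*y) by ring]
        ring
      have hint : IntegrableOn (fun y => (fun x (_:ℝ) => x) x y
          * (a * (2*a) * Real.exp (-(2*a) * y - (2*a-(2*a)) * x))) (Set.Ioi x) := by
        rw [hfun2]
        exact ((exp_Ioi0 (2*a) (by linarith) x).1.const_mul _)
      rw [inner_split a (2*a) hx (fun x (_:ℝ) => x) continuous_const hint]
      have hfun1 : (fun y => (fun x (_:ℝ) => x) x y
            * (a * (2*a) * Real.exp (-(2*a) * x - (2*a-(2*a)) * y)))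
          = fun y => (x*(a*(2*a)) * Real.exp (-((2*a)*x))) := by
        funext y
        rw [show -(2*a) * x - (2*a-(2*a)) * y = -((2*a)*x) by ring]
        ring
      rw [hfun1, hfun2, intervalIntegral.integral_const, integral_const_mul,
        (exp_Ioi0 (2*a) (by linarith) x).2]
      field_simp
      ring
    rw [setIntegral_congr_fun measurableSet_Ioi hEq,
      (polyExp_Ioi0 (2*a) (by linarith) 0 (2*a^2) a 0).2]
    field_simp
    ring
  · have hEq : ∀ x ∈ Set.Ioi (0:ℝ),
        (∫ y in Set.Ioi (0:ℝ), (fun x (_:ℝ) => x) x y * freundF2 a b x y)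
          = ((0*x^3 + 0*x^2 + (a*b/(2*a-b))*x + 0) * Real.exp (-(b*x))
            + (0*x^3 + 0*x^2 + (a - a*b/(2*a-b))*x + 0) * Real.exp (-(2*a*x))) := by
      intro x hx
      have hfun2 : (fun y => (fun x (_:ℝ) => x) x y
            * (a * b * Real.exp (-b * y - (2*a-b) * x)))
          = fun y => (x*(a*b)*Real.exp (-((2*a-b)*x))) * Real.exp (-(b*y)) := by
        funext y
        rw [show -b * y - (2*a-b) * x = -((2*a-b)*x) + -(b*y) by ring, Real.exp_add]
        ring
      have hint : IntegrableOn (fun y => (fun x (_:ℝ) => x) x y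
          * (a * b * Real.exp (-b * y - (2*a-b) * x))) (Set.Ioi x) := by
        rw [hfun2]
        exact ((exp_Ioi0 b hb x).1.const_mul _)
      rw [inner_split a b hx (fun x (_:ℝ) => x) continuous_const hint]
      have hfun1 : (fun y => (fun x (_:ℝ) => x) x y
            * (a * b * Real.exp (-b * x - (2*a-b) * y)))
          = fun y => (x*(a*b)*Real.exp (-(b*x))) * Real.exp (-((2*a-b)*y)) := by
        funext y
        rw [show -b * x - (2*a-b) * y = -(b*x) + -((2*a-b)*y) by ring, Real.exp_add]
        ring
      rw [hfun1, hfun2, intervalIntegral.integral_const_mul, intA0 (2*a-b) x hc,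
        integral_const_mul, (exp_Ioi0 b hb x).2,
        show Real.exp (-(2*a*x)) = Real.exp (-((2*a-b)*x)) * Real.exp (-(b*x)) by
          rw [← Real.exp_add, show -((2*a-b)*x) + -(b*x) = -(2*a*x) by ring]]
      field_simp
      ring
    rw [setIntegral_congr_fun measurableSet_Ioi hEq,
      outer_eval a b ha hb 0 0 (a*b/(2*a-b)) 0 0 0 (a - a*b/(2*a-b)) 0]
    field_simp [show a * 2 - b ≠ 0 by contrapose! hc; linarith]
    ring

private lemma f2E_Y (a b : ℝ) (ha : 0 < a) (hb : 0 < b) :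
    f2E a b (fun _ y => y) = (a+b)/(2*a*b) := by
  unfold f2E
  by_cases hc : (2*a - b) = 0
  · have hb2 : b = 2*a := by linarith
    subst hb2
    have hEq : ∀ x ∈ Set.Ioi (0:ℝ),
        (∫ y in Set.Ioi (0:ℝ), (fun (_:ℝ) y => y) x y * freundF2 a (2*a) x y)
          = (0*x^3 + (a^2)*x^2 + a*x + (1/2)) * Real.exp (-(2*a*x)) := by
      intro x hx
      have hfun2 : (fun y => (fun (_:ℝ) y => y) x y
            * (a * (2*a) * Real.exp (-(2*a) * y - (2*a-(2*a)) * x)))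
          = fun y => (a*(2*a)) * (y * Real.exp (-((2*a)*y))) := by
        funext y
        rw [show -(2*a) * y - (2*a-(2*a)) * x = -((2*a)*y) by ring]
        ring
      have hint : IntegrableOn (fun y => (fun (_:ℝ) y => y) x y
          * (a * (2*a) * Real.exp (-(2*a) * y - (2*a-(2*a)) * x))) (Set.Ioi x) := by
        rw [hfun2]
        exact ((pow1_exp_Ioi (2*a) (by linarith) x (le_of_lt hx)).1.const_mul _)
      rw [inner_split a (2*a) hx (fun (_:ℝ) y => y) continuous_id hint]
      have hfun1 : (fun y => (fun (_:ℝ) y => y) x y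
            * (a * (2*a) * Real.exp (-(2*a) * x - (2*a-(2*a)) * y)))
          = fun y => ((a*(2*a)) * Real.exp (-((2*a)*x))) * y := by
        funext y
        rw [show -(2*a) * x - (2*a-(2*a)) * y = -((2*a)*x) by ring]
        ring
      rw [hfun1, hfun2, intervalIntegral.integral_const_mul, integral_id,
        integral_const_mul, (pow1_exp_Ioi (2*a) (by linarith) x (le_of_lt hx)).2]
      field_simp
      ring
    rw [setIntegral_congr_fun measurableSet_Ioi hEq,
      (polyExp_Ioi0 (2*a) (by linarith) 0 (a^2) a (1/2)).2]
    field_simp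
    ring
  · have hEq : ∀ x ∈ Set.Ioi (0:ℝ),
        (∫ y in Set.Ioi (0:ℝ), (fun (_:ℝ) y => y) x y * freundF2 a b x y)
          = ((0*x^3 + 0*x^2 + 0*x + a*b/(2*a-b)^2) * Real.exp (-(b*x))
            + (0*x^3 + 0*x^2 + (a - a*b/(2*a-b))*x + (a/b - a*b/(2*a-b)^2)) * Real.exp (-(2*a*x))) := by
      intro x hx
      have hfun2 : (fun y => (fun (_:ℝ) y => y) x y
            * (a * b * Real.exp (-b * y - (2*a-b) * x)))
          = fun y => ((a*b)*Real.exp (-((2*a-b)*x))) * (y * Real.exp (-(b*y))) := by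
        funext y
        rw [show -b * y - (2*a-b) * x = -((2*a-b)*x) + -(b*y) by ring, Real.exp_add]
        ring
      have hint : IntegrableOn (fun y => (fun (_:ℝ) y => y) x y
          * (a * b * Real.exp (-b * y - (2*a-b) * x))) (Set.Ioi x) := by
        rw [hfun2]
        exact ((pow1_exp_Ioi b hb x (le_of_lt hx)).1.const_mul _)
      rw [inner_split a b hx (fun (_:ℝ) y => y) continuous_id hint]
      have hfun1 : (fun y => (fun (_:ℝ) y => y) x y
            * (a * b * Real.exp (-b * x - (2*a-b) * y)))
          = fun y => ((a*b)*Real.exp (-(b*x))) * (y * Real.exp (-((2*a-b)*y))) := by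
        funext y
        rw [show -b * x - (2*a-b) * y = -(b*x) + -((2*a-b)*y) by ring, Real.exp_add]
        ring
      rw [hfun1, hfun2, intervalIntegral.integral_const_mul, intA1 (2*a-b) x hc,
        integral_const_mul, (pow1_exp_Ioi b hb x (le_of_lt hx)).2,
        show Real.exp (-(2*a*x)) = Real.exp (-((2*a-b)*x)) * Real.exp (-(b*x)) by
          rw [← Real.exp_add, show -((2*a-b)*x) + -(b*x) = -(2*a*x) by ring]]
      field_simp [show a * 2 - b ≠ 0 by contrapose! hc; linarith]
      ring
    rw [setIntegral_congr_fun measurableSet_Ioi hEq,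
      outer_eval a b ha hb 0 0 0 (a*b/(2*a-b)^2) 0 0 (a - a*b/(2*a-b)) (a/b - a*b/(2*a-b)^2)]
    field_simp [show a * 2 - b ≠ 0 by contrapose! hc; linarith]
    ring

private lemma f2E_X2 (a b : ℝ) (ha : 0 < a) (hb : 0 < b) :
    f2E a b (fun x _ => x ^ 2) = (2*a^2+a*b+b^2)/(2*a^2*b^2) := by
  unfold f2E
  by_cases hc : (2*a - b) = 0
  · have hb2 : b = 2*a := by linarith
    subst hb2
    have hEq : ∀ x ∈ Set.Ioi (0:ℝ),
        (∫ y in Set.Ioi (0:ℝ), (fun x (_:ℝ) => x ^ 2) x y * freundF2 a (2*a) x y)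
          = ((2*a^2)*x^3 + a*x^2 + 0*x + 0) * Real.exp (-(2*a*x)) := by
      intro x hx
      have hfun2 : (fun y => (fun x (_:ℝ) => x ^ 2) x y
            * (a * (2*a) * Real.exp (-(2*a) * y - (2*a-(2*a)) * x)))
          = fun y => (x^2*(a*(2*a))) * Real.exp (-((2*a)*y)) := by
        funext y
        rw [show -(2*a) * y - (2*a-(2*a)) * x = -((2*a)*y) by ring]
        ring
      have hint : IntegrableOn (fun y => (fun x (_:ℝ) => x ^ 2) x y
          * (a * (2*a) * Real.exp (-(2*a) * y - (2*a-(2*a)) * x))) (Set.Ioi x) := by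
        rw [hfun2]
        exact ((exp_Ioi0 (2*a) (by linarith) x).1.const_mul _)
      rw [inner_split a (2*a) hx (fun x (_:ℝ) => x ^ 2) continuous_const hint]
      have hfun1 : (fun y => (fun x (_:ℝ) => x ^ 2) x y
            * (a * (2*a) * Real.exp (-(2*a) * x - (2*a-(2*a)) * y)))
          = fun y => (x^2*(a*(2*a)) * Real.exp (-((2*a)*x))) := by
        funext y
        rw [show -(2*a) * x - (2*a-(2*a)) * y = -((2*a)*x) by ring]
        ring
      rw [hfun1, hfun2, intervalIntegral.integral_const, integral_const_mul,
        (exp_Ioi0 (2*a) (by linarith) x).2]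
      field_simp
      ring
    rw [setIntegral_congr_fun measurableSet_Ioi hEq,
      (polyExp_Ioi0 (2*a) (by linarith) (2*a^2) a 0 0).2]
    field_simp
    ring
  · have hEq : ∀ x ∈ Set.Ioi (0:ℝ),
        (∫ y in Set.Ioi (0:ℝ), (fun x (_:ℝ) => x ^ 2) x y * freundF2 a b x y)
          = ((0*x^3 + (a*b/(2*a-b))*x^2 + 0*x + 0) * Real.exp (-(b*x))
            + (0*x^3 + (a - a*b/(2*a-b))*x^2 + 0*x + 0) * Real.exp (-(2*a*x))) := by
      intro x hx
      have hfun2 : (fun y => (fun x (_:ℝ) => x ^ 2) x y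
            * (a * b * Real.exp (-b * y - (2*a-b) * x)))
          = fun y => (x^2*(a*b)*Real.exp (-((2*a-b)*x))) * Real.exp (-(b*y)) := by
        funext y
        rw [show -b * y - (2*a-b) * x = -((2*a-b)*x) + -(b*y) by ring, Real.exp_add]
        ring
      have hint : IntegrableOn (fun y => (fun x (_:ℝ) => x ^ 2) x y
          * (a * b * Real.exp (-b * y - (2*a-b) * x))) (Set.Ioi x) := by
        rw [hfun2]
        exact ((exp_Ioi0 b hb x).1.const_mul _)
      rw [inner_split a b hx (fun x (_:ℝ) => x ^ 2) continuous_const hint]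
      have hfun1 : (fun y => (fun x (_:ℝ) => x ^ 2) x y
            * (a * b * Real.exp (-b * x - (2*a-b) * y)))
          = fun y => (x^2*(a*b)*Real.exp (-(b*x))) * Real.exp (-((2*a-b)*y)) := by
        funext y
        rw [show -b * x - (2*a-b) * y = -(b*x) + -((2*a-b)*y) by ring, Real.exp_add]
        ring
      rw [hfun1, hfun2, intervalIntegral.integral_const_mul, intA0 (2*a-b) x hc,
        integral_const_mul, (exp_Ioi0 b hb x).2,
        show Real.exp (-(2*a*x)) = Real.exp (-((2*a-b)*x)) * Real.exp (-(b*x)) by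
          rw [← Real.exp_add, show -((2*a-b)*x) + -(b*x) = -(2*a*x) by ring]]
      field_simp
      ring
    rw [setIntegral_congr_fun measurableSet_Ioi hEq,
      outer_eval a b ha hb 0 (a*b/(2*a-b)) 0 0 0 (a - a*b/(2*a-b)) 0 0]
    field_simp
    ring

private lemma f2E_Y2 (a b : ℝ) (ha : 0 < a) (hb : 0 < b) :
    f2E a b (fun _ y => y ^ 2) = (2*a^2+a*b+b^2)/(2*a^2*b^2) := by
  unfold f2E
  by_cases hc : (2*a - b) = 0
  · have hb2 : b = 2*a := by linarith
    subst hb2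
    have hEq : ∀ x ∈ Set.Ioi (0:ℝ),
        (∫ y in Set.Ioi (0:ℝ), (fun (_:ℝ) y => y ^ 2) x y * freundF2 a (2*a) x y)
          = ((2*a^2/3)*x^3 + a*x^2 + 1*x + (1/(2*a))) * Real.exp (-(2*a*x)) := by
      intro x hx
      have hfun2 : (fun y => (fun (_:ℝ) y => y ^ 2) x y
            * (a * (2*a) * Real.exp (-(2*a) * y - (2*a-(2*a)) * x)))
          = fun y => (a*(2*a)) * (y^2 * Real.exp (-((2*a)*y))) := by
        funext y
        rw [show -(2*a) * y - (2*a-(2*a)) * x = -((2*a)*y) by ring]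
        ring
      have hint : IntegrableOn (fun y => (fun (_:ℝ) y => y ^ 2) x y
          * (a * (2*a) * Real.exp (-(2*a) * y - (2*a-(2*a)) * x))) (Set.Ioi x) := by
        rw [hfun2]
        exact ((pow2_exp_Ioi (2*a) (by linarith) x).1.const_mul _)
      rw [inner_split a (2*a) hx (fun (_:ℝ) y => y ^ 2) (by continuity) hint]
      have hfun1 : (fun y => (fun (_:ℝ) y => y ^ 2) x y
            * (a * (2*a) * Real.exp (-(2*a) * x - (2*a-(2*a)) * y)))
          = fun y => ((a*(2*a)) * Real.exp (-((2*a)*x))) * y^2 := by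
        funext y
        rw [show -(2*a) * x - (2*a-(2*a)) * y = -((2*a)*x) by ring]
        ring
      rw [hfun1, hfun2, intervalIntegral.integral_const_mul, integral_pow,
        integral_const_mul, (pow2_exp_Ioi (2*a) (by linarith) x).2]
      norm_num
      field_simp
      ring
    rw [setIntegral_congr_fun measurableSet_Ioi hEq,
      (polyExp_Ioi0 (2*a) (by linarith) (2*a^2/3) a 1 (1/(2*a))).2]
    field_simp
    ring
  · have hEq : ∀ x ∈ Set.Ioi (0:ℝ),
        (∫ y in Set.Ioi (0:ℝ), (fun (_:ℝ) y => y ^ 2) x y * freundF2 a b x y)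
          = ((0*x^3 + 0*x^2 + 0*x + 2*a*b/(2*a-b)^3) * Real.exp (-(b*x))
            + (0*x^3 + (a - a*b/(2*a-b))*x^2 + (2*a/b - 2*a*b/(2*a-b)^2)*x
              + (2*a/b^2 - 2*a*b/(2*a-b)^3)) * Real.exp (-(2*a*x))) := by
      intro x hx
      have hfun2 : (fun y => (fun (_:ℝ) y => y ^ 2) x y
            * (a * b * Real.exp (-b * y - (2*a-b) * x)))
          = fun y => ((a*b)*Real.exp (-((2*a-b)*x))) * (y^2 * Real.exp (-(b*y))) := by
        funext y
        rw [show -b * y - (2*a-b) * x = -((2*a-b)*x) + -(b*y) by ring, Real.exp_add]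
        ring
      have hint : IntegrableOn (fun y => (fun (_:ℝ) y => y ^ 2) x y
          * (a * b * Real.exp (-b * y - (2*a-b) * x))) (Set.Ioi x) := by
        rw [hfun2]
        exact ((pow2_exp_Ioi b hb x).1.const_mul _)
      rw [inner_split a b hx (fun (_:ℝ) y => y ^ 2) (by continuity) hint]
      have hfun1 : (fun y => (fun (_:ℝ) y => y ^ 2) x y
            * (a * b * Real.exp (-b * x - (2*a-b) * y)))
          = fun y => ((a*b)*Real.exp (-(b*x))) * (y^2 * Real.exp (-((2*a-b)*y))) := by
        funext y
        rw [show -b * x - (2*a-b) * y = -(b*x) + -((2*a-b)*y) by ring, Real.exp_add]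
        ring
      rw [hfun1, hfun2, intervalIntegral.integral_const_mul, intA2 (2*a-b) x hc,
        integral_const_mul, (pow2_exp_Ioi b hb x).2,
        show Real.exp (-(2*a*x)) = Real.exp (-((2*a-b)*x)) * Real.exp (-(b*x)) by
          rw [← Real.exp_add, show -((2*a-b)*x) + -(b*x) = -(2*a*x) by ring]]
      field_simp [show a * 2 - b ≠ 0 by contrapose! hc; linarith]
      ring
    rw [setIntegral_congr_fun measurableSet_Ioi hEq,
      outer_eval a b ha hb 0 0 0 (2*a*b/(2*a-b)^3) 0 (a - a*b/(2*a-b))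
        (2*a/b - 2*a*b/(2*a-b)^2) (2*a/b^2 - 2*a*b/(2*a-b)^3)]
    field_simp
    ring

private lemma f2E_XY (a b : ℝ) (ha : 0 < a) (hb : 0 < b) :
    f2E a b (fun x y => x * y) = (a+b)/(2*a^2*b) := by
  unfold f2E
  by_cases hc : (2*a - b) = 0
  · have hb2 : b = 2*a := by linarith
    subst hb2
    have hEq : ∀ x ∈ Set.Ioi (0:ℝ),
        (∫ y in Set.Ioi (0:ℝ), (fun x y => x * y) x y * freundF2 a (2*a) x y)
          = ((a^2)*x^3 + a*x^2 + (1/2)*x + 0) * Real.exp (-(2*a*x)) := by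
      intro x hx
      have hfun2 : (fun y => (fun x y => x * y) x y
            * (a * (2*a) * Real.exp (-(2*a) * y - (2*a-(2*a)) * x)))
          = fun y => (x*(a*(2*a))) * (y * Real.exp (-((2*a)*y))) := by
        funext y
        rw [show -(2*a) * y - (2*a-(2*a)) * x = -((2*a)*y) by ring]
        ring
      have hint : IntegrableOn (fun y => (fun x y => x * y) x y
          * (a * (2*a) * Real.exp (-(2*a) * y - (2*a-(2*a)) * x))) (Set.Ioi x) := by
        rw [hfun2]
        exact ((pow1_exp_Ioi (2*a) (by linarith) x (le_of_lt hx)).1.const_mul _)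
      rw [inner_split a (2*a) hx (fun x y => x * y) (by continuity) hint]
      have hfun1 : (fun y => (fun x y => x * y) x y
            * (a * (2*a) * Real.exp (-(2*a) * x - (2*a-(2*a)) * y)))
          = fun y => (x*(a*(2*a)) * Real.exp (-((2*a)*x))) * y := by
        funext y
        rw [show -(2*a) * x - (2*a-(2*a)) * y = -((2*a)*x) by ring]
        ring
      rw [hfun1, hfun2, intervalIntegral.integral_const_mul, integral_id,
        integral_const_mul, (pow1_exp_Ioi (2*a) (by linarith) x (le_of_lt hx)).2]
      field_simp
      ring
    rw [setIntegral_congr_fun measurableSet_Ioi hEq,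
      (polyExp_Ioi0 (2*a) (by linarith) (a^2) a (1/2) 0).2]
    field_simp
    ring
  · have hEq : ∀ x ∈ Set.Ioi (0:ℝ),
        (∫ y in Set.Ioi (0:ℝ), (fun x y => x * y) x y * freundF2 a b x y)
          = ((0*x^3 + 0*x^2 + (a*b/(2*a-b)^2)*x + 0) * Real.exp (-(b*x))
            + (0*x^3 + (a - a*b/(2*a-b))*x^2 + (a/b - a*b/(2*a-b)^2)*x + 0)
              * Real.exp (-(2*a*x))) := by
      intro x hx
      have hfun2 : (fun y => (fun x y => x * y) x y
            * (a * b * Real.exp (-b * y - (2*a-b) * x)))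
          = fun y => (x*(a*b)*Real.exp (-((2*a-b)*x))) * (y * Real.exp (-(b*y))) := by
        funext y
        rw [show -b * y - (2*a-b) * x = -((2*a-b)*x) + -(b*y) by ring, Real.exp_add]
        ring
      have hint : IntegrableOn (fun y => (fun x y => x * y) x y
          * (a * b * Real.exp (-b * y - (2*a-b) * x))) (Set.Ioi x) := by
        rw [hfun2]
        exact ((pow1_exp_Ioi b hb x (le_of_lt hx)).1.const_mul _)
      rw [inner_split a b hx (fun x y => x * y) (by continuity) hint]
      have hfun1 : (fun y => (fun x y => x * y) x y
            * (a * b * Real.exp (-b * x - (2*a-b) * y)))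
          = fun y => (x*(a*b)*Real.exp (-(b*x))) * (y * Real.exp (-((2*a-b)*y))) := by
        funext y
        rw [show -b * x - (2*a-b) * y = -(b*x) + -((2*a-b)*y) by ring, Real.exp_add]
        ring
      rw [hfun1, hfun2, intervalIntegral.integral_const_mul, intA1 (2*a-b) x hc,
        integral_const_mul, (pow1_exp_Ioi b hb x (le_of_lt hx)).2,
        show Real.exp (-(2*a*x)) = Real.exp (-((2*a-b)*x)) * Real.exp (-(b*x)) by
          rw [← Real.exp_add, show -((2*a-b)*x) + -(b*x) = -(2*a*x) by ring]]
      field_simp [show a * 2 - b ≠ 0 by contrapose! hc; linarith]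
      ring
    rw [setIntegral_congr_fun measurableSet_Ioi hEq,
      outer_eval a b ha hb 0 0 (a*b/(2*a-b)^2) 0 0 (a - a*b/(2*a-b)) (a/b - a*b/(2*a-b)^2) 0]
    field_simp [show a * 2 - b ≠ 0 by contrapose! hc; linarith]
    ring

theorem freundF2_correlation (a b : ℝ) (ha : 0 < a) (hb : 0 < b) :
    f2Rho a b = 1 - 4 * a ^ 2 / (3 * a ^ 2 + b ^ 2) ∧
    -1 / 3 < f2Rho a b ∧ f2Rho a b < 1 := by
  have ha0 : a ≠ 0 := ne_of_gt ha
  have hb0 : b ≠ 0 := ne_of_gt hb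
  have hden : (0:ℝ) < 3 * a ^ 2 + b ^ 2 := by positivity
  have hV : f2E a b (fun x _ => x ^ 2) - (f2E a b (fun x _ => x)) ^ 2
      = (3*a^2+b^2)/(4*a^2*b^2) := by
    rw [f2E_X2 a b ha hb, f2E_X a b ha hb]
    field_simp
    ring
  have hVy : f2E a b (fun _ y => y ^ 2) - (f2E a b (fun _ y => y)) ^ 2
      = (3*a^2+b^2)/(4*a^2*b^2) := by
    rw [f2E_Y2 a b ha hb, f2E_Y a b ha hb]
    field_simp
    ring
  have hρ : f2Rho a b = (b^2 - a^2)/(3*a^2+b^2) := by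
    unfold f2Rho
    rw [hV, hVy, f2E_XY a b ha hb, f2E_X a b ha hb, f2E_Y a b ha hb,
      Real.mul_self_sqrt (by positivity)]
    rw [div_eq_div_iff (by positivity) (ne_of_gt hden)]
    field_simp
    ring
  refine ⟨?_, ?_, ?_⟩
  · rw [hρ]
    field_simp
    ring
  · rw [hρ, lt_div_iff₀ hden]
    nlinarith [mul_pos hb hb]
  · rw [hρ, div_lt_one hden]
    nlinarith [mul_pos ha ha]
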